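/- Let θ, θ* ∈ [-π/2, π/2] with tan(θ/2)tan(θ*/2) ≥ 0 and |tan(θ/2) - tan(θ*/2)| ≤ 2^{-n} where n = 1 + ⌈log₂(1/ε)⌉ for some ε > 0. Then the operator distance ||R_θ - R_{θ*}|| = 2|sin((θ-θ*)/2)| satisfies ||R_θ - R_{θ*}|| ≤ |θ - θ*| ≤ ε. -/

import Mathlib

open Complex Real Matrix

noncomputable def Rz (φ : ℝ) : Matrix (Fin 2) (Fin 2) ℂ :=
  Matrix.diagonal ![1, Complex.exp (Complex.I * φ)]

lemma Rz_sub (θ θs : ℝ) : Rz θ - Rz θs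
    = Matrix.diagonal ![0, Complex.exp (Complex.I * θ) - Complex.exp (Complex.I * θs)] := by
  unfold Rz
  rw [Matrix.diagonal_sub]
  ext i j
  fin_cases i <;> fin_cases j <;> simp [Matrix.diagonal]

lemma clm_diag_norm (c : ℂ) :
    ‖Matrix.toEuclideanCLM (𝕜 := ℂ) (n := Fin 2) (Matrix.diagonal ![0, c])‖ = ‖c‖ := by
  set A := Matrix.toEuclideanCLM (𝕜 := ℂ) (n := Fin 2) (Matrix.diagonal ![0, c]) with hA
  have happ : ∀ (x : EuclideanSpace ℂ (Fin 2)) (i : Fin 2), A x i = ![(0:ℂ), c] i * x i := by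
    intro x i
    show (WithLp.ofLp (A x)) i = _
    rw [hA, Matrix.ofLp_toEuclideanCLM]
    simp [Matrix.toLin'_apply, Matrix.mulVec_diagonal]
  refine le_antisymm ?_ ?_
  · apply ContinuousLinearMap.opNorm_le_bound _ (norm_nonneg c)
    intro x
    rw [EuclideanSpace.norm_eq, EuclideanSpace.norm_eq, Fin.sum_univ_two, Fin.sum_univ_two,
      happ x 0, happ x 1]
    simp only [Matrix.cons_val_zero, Matrix.cons_val_one, Matrix.head_cons, zero_mul,
      norm_zero, norm_mul]
    have hr : ‖c‖ * Real.sqrt (‖x 0‖ ^ 2 + ‖x 1‖ ^ 2)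
        = Real.sqrt (‖c‖ ^ 2 * (‖x 0‖ ^ 2 + ‖x 1‖ ^ 2)) := by
      rw [Real.sqrt_mul (sq_nonneg _), Real.sqrt_sq (norm_nonneg c)]
    rw [hr]
    apply Real.sqrt_le_sqrt
    nlinarith [sq_nonneg (‖c‖ * ‖x 0‖)]
  · have he : ‖(EuclideanSpace.single (1 : Fin 2) (1:ℂ) : EuclideanSpace ℂ (Fin 2))‖ = 1 := by
      rw [EuclideanSpace.norm_single, norm_one]
    have h1 := A.le_opNorm (EuclideanSpace.single (1 : Fin 2) (1:ℂ))
    rw [he, mul_one] at h1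
    refine le_trans (le_of_eq ?_) h1
    rw [EuclideanSpace.norm_eq, Fin.sum_univ_two, happ _ 0, happ _ 1]
    simp [EuclideanSpace.single_apply, Real.sqrt_sq_eq_abs]

lemma norm_exp_sub (θ θs : ℝ) : ‖Complex.exp (Complex.I * θ) - Complex.exp (Complex.I * θs)‖
    = 2 * |Real.sin ((θ - θs) / 2)| := by
  have hz : Complex.exp (Complex.I * θ) - Complex.exp (Complex.I * θs)
      = Complex.ofReal (Real.cos θ - Real.cos θs)
        + Complex.ofReal (Real.sin θ - Real.sin θs) * Complex.I := by
    rw [mul_comm Complex.I, mul_comm Complex.I, Complex.exp_mul_I, Complex.exp_mul_I,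
      ← Complex.ofReal_cos, ← Complex.ofReal_cos, ← Complex.ofReal_sin, ← Complex.ofReal_sin]
    push_cast
    ring
  rw [hz, Complex.norm_add_mul_I]
  have key : (Real.cos θ - Real.cos θs) ^ 2 + (Real.sin θ - Real.sin θs) ^ 2
      = (2 * |Real.sin ((θ - θs) / 2)|) ^ 2 := by
    rw [Real.cos_sub_cos, Real.sin_sub_sin]
    have h3 := Real.sin_sq_add_cos_sq ((θ + θs) / 2)
    have h4 : |Real.sin ((θ - θs) / 2)| ^ 2 = Real.sin ((θ - θs) / 2) ^ 2 := sq_abs _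
    nlinarith [h3, h4]
  rw [key, Real.sqrt_sq (by positivity)]

lemma tan_expand {a b : ℝ} (ha : a ∈ Set.Icc (-(π/4)) (π/4)) (hb : b ∈ Set.Icc (-(π/4)) (π/4))
    (hle : b ≤ a) : a - b ≤ Real.tan a - Real.tan b := by
  obtain ⟨ha1, ha2⟩ := ha
  obtain ⟨hb1, hb2⟩ := hb
  have hpi := Real.pi_pos
  have hca : 0 < Real.cos a :=
    Real.cos_pos_of_mem_Ioo ⟨by linarith, by linarith⟩
  have hcb : 0 < Real.cos b :=
    Real.cos_pos_of_mem_Ioo ⟨by linarith, by linarith⟩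
  set d := (a - b) / 2 with hd
  have hd0 : 0 ≤ d := by simp [hd]; linarith
  have hd2 : d < π / 2 := by rw [hd]; linarith
  have hcd : 0 < Real.cos d := Real.cos_pos_of_mem_Ioo ⟨by linarith, hd2⟩
  have htd : d ≤ Real.tan d := Real.le_tan hd0 hd2
  have hdd : d * Real.cos d ≤ Real.sin d := by
    rw [Real.tan_eq_sin_div_cos, le_div_iff₀ hcd] at htd
    exact htd
  -- tan a - tan b = sin (a - b) / (cos a * cos b)
  have hident : Real.tan a - Real.tan b = Real.sin (a - b) / (Real.cos a * Real.cos b) := by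
    rw [Real.tan_eq_sin_div_cos, Real.tan_eq_sin_div_cos, Real.sin_sub]
    field_simp
  rw [hident, le_div_iff₀ (by positivity)]
  have hsin : Real.sin (a - b) = 2 * Real.sin d * Real.cos d := by
    rw [hd, ← Real.sin_two_mul]
    ring_nf
  have hcc : Real.cos a * Real.cos b ≤ Real.cos d ^ 2 := by
    have h1 : Real.cos a * Real.cos b = (Real.cos (a - b) + Real.cos (a + b)) / 2 := by
      rw [Real.cos_sub, Real.cos_add]; ring
    have h2 : Real.cos d ^ 2 = 1 / 2 + Real.cos (a - b) / 2 := by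
      have h := Real.cos_sq d
      rwa [show 2 * d = a - b by rw [hd]; ring] at h
    have h3 : Real.cos (a + b) ≤ 1 := Real.cos_le_one _
    nlinarith
  have hab : a - b = 2 * d := by rw [hd]; ring
  rw [hsin, hab]
  nlinarith [hdd, hcd.le, hcc]

theorem stmt_7 (ε θ θs : ℝ) (hε : 0 < ε)
    (hθ : θ ∈ Set.Icc (-(π / 2)) (π / 2)) (hθs : θs ∈ Set.Icc (-(π / 2)) (π / 2))
    (hsign : 0 ≤ Real.tan (θ / 2) * Real.tan (θs / 2))
    (n : ℤ) (hn : n = 1 + ⌈Real.logb 2 (1 / ε)⌉)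
    (hclose : |Real.tan (θ / 2) - Real.tan (θs / 2)| ≤ (2 : ℝ) ^ (-n)) :
    ‖Matrix.toEuclideanCLM (𝕜 := ℂ) (n := Fin 2) (Rz θ - Rz θs)‖
      = 2 * |Real.sin ((θ - θs) / 2)| ∧
    ‖Matrix.toEuclideanCLM (𝕜 := ℂ) (n := Fin 2) (Rz θ - Rz θs)‖ ≤ |θ - θs| ∧
    |θ - θs| ≤ ε := by
  have hnorm : ‖Matrix.toEuclideanCLM (𝕜 := ℂ) (n := Fin 2) (Rz θ - Rz θs)‖
      = 2 * |Real.sin ((θ - θs) / 2)| := by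
    rw [Rz_sub, clm_diag_norm, norm_exp_sub]
  have h2 : 2 * |Real.sin ((θ - θs) / 2)| ≤ |θ - θs| := by
    have := Real.abs_sin_le_abs (x := (θ - θs) / 2)
    rw [abs_div] at this
    simp only [_root_.abs_two] at this
    linarith
  -- |θ - θs| ≤ ε
  have hexp : |θ / 2 - θs / 2| ≤ |Real.tan (θ / 2) - Real.tan (θs / 2)| := by
    obtain ⟨h1, h2'⟩ := hθ
    obtain ⟨h3, h4⟩ := hθs
    have haI : θ / 2 ∈ Set.Icc (-(π/4)) (π/4) := ⟨by linarith, by linarith⟩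
    have hbI : θs / 2 ∈ Set.Icc (-(π/4)) (π/4) := ⟨by linarith, by linarith⟩
    rcases le_total (θs / 2) (θ / 2) with h | h
    · have := tan_expand haI hbI h
      rw [_root_.abs_of_nonneg (by linarith : (0:ℝ) ≤ θ / 2 - θs / 2)]
      calc θ / 2 - θs / 2 ≤ Real.tan (θ / 2) - Real.tan (θs / 2) := this
        _ ≤ |Real.tan (θ / 2) - Real.tan (θs / 2)| := le_abs_self _
    · have := tan_expand hbI haI h
      rw [_root_.abs_of_nonpos (by linarith : θ / 2 - θs / 2 ≤ 0)]
      calc -(θ / 2 - θs / 2) ≤ Real.tan (θs / 2) - Real.tan (θ / 2) := by linarith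
        _ ≤ |Real.tan (θ / 2) - Real.tan (θs / 2)| := by rw [abs_sub_comm]; exact le_abs_self _
  have hfinal : |θ - θs| ≤ ε := by
    have hh : |θ - θs| ≤ 2 * (2:ℝ) ^ (-n) := by
      have : |θ - θs| = 2 * |θ / 2 - θs / 2| := by
        rw [show θ / 2 - θs / 2 = (θ - θs) / 2 by ring, abs_div, _root_.abs_two]; ring
      rw [this]
      linarith [hexp.trans hclose]
    refine hh.trans ?_
    have h1n : 2 * (2:ℝ) ^ (-n) = (2:ℝ) ^ (1 - n) := by
      rw [zpow_sub₀ (by norm_num : (2:ℝ) ≠ 0), zpow_one, _root_.zpow_neg]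
      field_simp
    rw [h1n, hn]
    have hm : Real.logb 2 (1 / ε) ≤ (⌈Real.logb 2 (1 / ε)⌉ : ℝ) := Int.le_ceil _
    have hlogb : Real.logb 2 (1 / ε) = -Real.logb 2 ε := by
      rw [one_div, Real.logb_inv]
    have hzrp : (2:ℝ) ^ (1 - (1 + ⌈Real.logb 2 (1 / ε)⌉))
        = (2:ℝ) ^ ((-(⌈Real.logb 2 (1 / ε)⌉:ℤ) : ℤ) : ℝ) := by
      rw [Real.rpow_intCast]
      congr 1
      ring
    rw [hzrp]
    calc (2:ℝ) ^ ((-(⌈Real.logb 2 (1 / ε)⌉:ℤ) : ℤ) : ℝ)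
        ≤ (2:ℝ) ^ (Real.logb 2 ε) := by
          apply Real.rpow_le_rpow_of_exponent_le one_le_two
          push_cast
          linarith [hm, hlogb]
      _ = ε := Real.rpow_logb (by norm_num) (by norm_num) hε
  exact ⟨hnorm, hnorm ▸ h2, hfinal⟩
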